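/- Let H = L + W be the Hamiltonian with L the combinatorial Laplacian of the complete graph on V ≥ 2 vertices and W a diagonal matrix with a unique smallest diagonal entry W_{u₀}. Then the first excited eigenvalue satisfies λ₁ < V + W_{u₁}, where W_{u₁} is the second smallest diagonal entry of W. -/

import Mathlib

open Matrix RealInnerProductSpace

/-- The `i`-th smallest eigenvalue (with multiplicity) of a Hermitian matrix. -/
noncomputable def sortedEig {n : ℕ} {A : Matrix (Fin n) (Fin n) ℝ}
    (hA : A.IsHermitian) (i : Fin n) : ℝ :=
  hA.eigenvalues (Tuple.sort hA.eigenvalues i)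

/-- The combinatorial Laplacian of the complete graph on `V` vertices:
`L = V·I − J`, where `J` is the all-ones matrix. -/
def cgL (V : ℕ) : Matrix (Fin V) (Fin V) ℝ :=
  (V : ℝ) • (1 : Matrix (Fin V) (Fin V) ℝ) - Matrix.of (fun _ _ => (1 : ℝ))

/-- The second smallest value of `W`, i.e. the smallest value away from `m`. -/
noncomputable def secondMin {V : ℕ} (hV : 2 ≤ V) (W : Fin V → ℝ) (m : Fin V) : ℝ :=
  (Finset.univ.erase m).inf'
    (by
      rw [Finset.erase_nonempty (Finset.mem_univ m)]
      refine Finset.one_lt_card_iff_nontrivial.mp ?_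
      rw [Finset.card_univ, Fintype.card_fin]
      omega) W

/-- If all eigenvalues except possibly the one with index `j₀` are at least `c`, then on the
orthogonal complement of the `j₀`-th eigenvector the quadratic form is bounded below by `c`. -/
lemma rayleigh_lower_aux {n : ℕ} {A : Matrix (Fin n) (Fin n) ℝ} (hA : A.IsHermitian)
    {c : ℝ} {j₀ : Fin n} (hge : ∀ j, j ≠ j₀ → c ≤ hA.eigenvalues j)
    (ψ : EuclideanSpace ℝ (Fin n)) (horth : ⟪hA.eigenvectorBasis j₀, ψ⟫ = 0) :
    c * ⟪ψ, ψ⟫ ≤ ⟪ψ, Matrix.toEuclideanLin A ψ⟫ := by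
  set B := hA.eigenvectorBasis with hB
  have hT : ∀ j, Matrix.toEuclideanLin A (B j) = hA.eigenvalues j • B j := by
    intro j
    have h := hA.mulVec_eigenvectorBasis j
    ext i
    simpa [Matrix.toEuclideanLin_apply] using congrFun h i
  have hsym := (Matrix.isHermitian_iff_isSymmetric.mp hA)
  have hcoord : ∀ j, B.repr (Matrix.toEuclideanLin A ψ) j
      = hA.eigenvalues j * B.repr ψ j := by
    intro j
    rw [OrthonormalBasis.repr_apply_apply, OrthonormalBasis.repr_apply_apply]
    calc ⟪B j, Matrix.toEuclideanLin A ψ⟫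
        = ⟪Matrix.toEuclideanLin A (B j), ψ⟫ := (hsym (B j) ψ).symm
      _ = ⟪hA.eigenvalues j • B j, ψ⟫ := by rw [hT]
      _ = hA.eigenvalues j * ⟪B j, ψ⟫ := real_inner_smul_left _ _ _
  have expand : ∀ x y : EuclideanSpace ℝ (Fin n),
      ⟪x, y⟫ = ∑ j, B.repr x j * B.repr y j := by
    intro x y
    calc ⟪x, y⟫ = ⟪B.repr x, B.repr y⟫ := (B.repr.inner_map_map x y).symm
      _ = ∑ j, B.repr x j * B.repr y j := by
          simp only [PiLp.inner_apply, RCLike.inner_apply, conj_trivial]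
          exact Finset.sum_congr rfl (fun _ _ => mul_comm _ _)
  rw [expand ψ ψ, expand ψ (Matrix.toEuclideanLin A ψ), Finset.mul_sum]
  apply Finset.sum_le_sum
  intro j _
  rw [hcoord]
  by_cases hj : j = j₀
  · subst hj
    have h0 : B.repr ψ j = 0 := by
      rw [OrthonormalBasis.repr_apply_apply]; exact horth
    simp [h0]
  · have h1 : c ≤ hA.eigenvalues j := hge j hj
    have h2 : 0 ≤ B.repr ψ j * B.repr ψ j := mul_self_nonneg _
    calc c * (B.repr ψ j * B.repr ψ j) ≤ hA.eigenvalues j * (B.repr ψ j * B.repr ψ j) :=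
          mul_le_mul_of_nonneg_right h1 h2
      _ = B.repr ψ j * (hA.eigenvalues j * B.repr ψ j) := by ring

/-- For `H = L + W` with `L` the complete graph Laplacian and `W`
diagonal with a unique smallest entry `W m`, the first excited eigenvalue satisfies
`λ₁ < V + W_{u₁}` where `W_{u₁}` is the second smallest diagonal entry. -/
theorem first_excited_lt {V : ℕ} (hV : 2 ≤ V) (W : Fin V → ℝ) (m : Fin V)
    (hmin : ∀ u : Fin V, u ≠ m → W m < W u)
    (hH : (cgL V + Matrix.diagonal W).IsHermitian) :
    sortedEig hH ⟨1, by omega⟩ < (V : ℝ) + secondMin hV W m := by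
  -- pick `u₁` attaining the second minimum
  have hne : (Finset.univ.erase m).Nonempty := by
    rw [Finset.erase_nonempty (Finset.mem_univ m)]
    refine Finset.one_lt_card_iff_nontrivial.mp ?_
    rw [Finset.card_univ, Fintype.card_fin]
    omega
  obtain ⟨u₁, hu₁mem, hsval⟩ := Finset.exists_mem_eq_inf' hne W
  have hu₁ : u₁ ≠ m := (Finset.mem_erase.mp hu₁mem).1
  have hs : secondMin hV W m = W u₁ := hsval
  have hWm : W m < W u₁ := hmin u₁ hu₁
  rw [hs]
  by_contra hcon
  push_neg at hcon
  set c : ℝ := (V : ℝ) + W u₁ with hc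
  -- all eigenvalues except the smallest are ≥ c
  set σ := Tuple.sort hH.eigenvalues with hσ
  have h0V : 0 < V := by omega
  have hge : ∀ j, j ≠ σ ⟨0, h0V⟩ → c ≤ hH.eigenvalues j := by
    intro j hj
    have hi : σ.symm j ≠ ⟨0, h0V⟩ := by
      intro h
      exact hj (by rw [← h, Equiv.apply_symm_apply])
    have h1 : (⟨1, by omega⟩ : Fin V) ≤ σ.symm j := by
      have : (σ.symm j).1 ≠ 0 := fun h => hi (Fin.ext h)
      exact Fin.mk_le_of_le_val (by omega)
    have hmono := Tuple.monotone_sort hH.eigenvalues h1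
    calc c ≤ sortedEig hH ⟨1, by omega⟩ := hcon
      _ ≤ hH.eigenvalues (σ (σ.symm j)) := hmono
      _ = hH.eigenvalues j := by rw [Equiv.apply_symm_apply]
  -- construct trial vector
  set φ : EuclideanSpace ℝ (Fin V) := hH.eigenvectorBasis (σ ⟨0, h0V⟩) with hφ
  obtain ⟨a, b, hab, horth0⟩ : ∃ a b : ℝ, (a ≠ 0 ∨ b ≠ 0) ∧ φ m * a + φ u₁ * b = 0 := by
    by_cases h : φ m = 0 ∧ φ u₁ = 0
    · exact ⟨1, 0, Or.inl one_ne_zero, by rw [h.1, h.2]; ring⟩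
    · refine ⟨φ u₁, -φ m, ?_, by ring⟩
      by_contra hcc
      push_neg at hcc
      exact h ⟨neg_eq_zero.mp hcc.2, hcc.1⟩
  set ψ : EuclideanSpace ℝ (Fin V) :=
    WithLp.toLp 2 (fun v => if v = m then a else if v = u₁ then b else 0 : Fin V → ℝ) with hψ
  have hψm : ψ m = a := by simp [hψ]
  have hψu : ψ u₁ = b := by simp [hψ, hu₁]
  have hψ0 : ∀ v, v ≠ m → v ≠ u₁ → ψ v = 0 := by
    intro v h1 h2; simp [hψ, h1, h2]
  -- two-point sums
  have hsum : ∀ f : Fin V → ℝ, ∑ i, f i * ψ i = f m * a + f u₁ * b := by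
    intro f
    rw [show (Finset.univ : Finset (Fin V)) = insert m (insert u₁ (Finset.univ \ {m, u₁})) from ?_]
    · rw [Finset.sum_insert, Finset.sum_insert]
      · rw [Finset.sum_eq_zero, hψm, hψu]
        · ring
        · intro v hv
          simp only [Finset.mem_sdiff, Finset.mem_insert, Finset.mem_singleton] at hv
          push_neg at hv
          rw [hψ0 v hv.2.1 hv.2.2, mul_zero]
      · simp
      · simp [hu₁, Ne.symm hu₁]
    · symm
      apply Finset.eq_univ_iff_forall.mpr
      intro v
      by_cases h1 : v = m
      · simp [h1]
      · by_cases h2 : v = u₁ <;> simp [h1, h2]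
  have hsum' : ∀ f : Fin V → ℝ, ∑ i, ψ i * f i = a * f m + b * f u₁ := by
    intro f
    calc ∑ i, ψ i * f i = ∑ i, f i * ψ i := by simp [mul_comm]
      _ = f m * a + f u₁ * b := hsum f
      _ = a * f m + b * f u₁ := by ring
  have hinner : ∀ x y : EuclideanSpace ℝ (Fin V), ⟪x, y⟫ = ∑ i, x i * y i := by
    intro x y
    simp [PiLp.inner_apply, RCLike.inner_apply, conj_trivial]
    exact Finset.sum_congr rfl (fun _ _ => mul_comm _ _)
  -- orthogonality to the ground state
  have horth : ⟪φ, ψ⟫ = 0 :=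
    (hinner φ ψ).trans ((hsum (fun i => φ i)).trans horth0)
  -- lower bound from the spectral decomposition
  have hlow := rayleigh_lower_aux hH hge ψ horth
  -- explicit value of the quadratic form
  set M : Matrix (Fin V) (Fin V) ℝ := cgL V + Matrix.diagonal W with hM
  have happly : ∀ i : Fin V,
      (Matrix.toEuclideanLin M ψ) i = M i m * a + M i u₁ * b := by
    intro i
    have : (Matrix.toEuclideanLin M ψ) i = ∑ j, M i j * ψ j := by
      simp [Matrix.toEuclideanLin_apply, Matrix.mulVec, dotProduct]
    rw [this, hsum (fun j => M i j)]
  have hMmm : M m m = (V : ℝ) - 1 + W m := by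
    simp [hM, cgL, Matrix.add_apply, Matrix.sub_apply, Matrix.smul_apply, Matrix.one_apply,
      Matrix.diagonal_apply_eq]
  have hMuu : M u₁ u₁ = (V : ℝ) - 1 + W u₁ := by
    simp [hM, cgL, Matrix.add_apply, Matrix.sub_apply, Matrix.smul_apply, Matrix.one_apply,
      Matrix.diagonal_apply_eq]
  have hMmu : M m u₁ = -1 := by
    simp [hM, cgL, Matrix.add_apply, Matrix.sub_apply, Matrix.smul_apply, Matrix.one_apply,
      Matrix.diagonal_apply, Ne.symm hu₁]
  have hMum : M u₁ m = -1 := by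
    simp [hM, cgL, Matrix.add_apply, Matrix.sub_apply, Matrix.smul_apply, Matrix.one_apply,
      Matrix.diagonal_apply, hu₁]
  have hQ : ⟪ψ, Matrix.toEuclideanLin M ψ⟫
      = a * (M m m * a + M m u₁ * b) + b * (M u₁ m * a + M u₁ u₁ * b) := by
    rw [hinner, hsum' (fun i => (Matrix.toEuclideanLin M ψ) i)]
    rw [happly m, happly u₁]
  have hNorm : ⟪ψ, ψ⟫ = a * a + b * b := by
    rw [hinner, hsum' (fun i => ψ i), hψm, hψu]
  rw [hQ, hNorm, hMmm, hMuu, hMmu, hMum] at hlow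
  -- derive the contradiction
  rcases eq_or_ne a 0 with ha | ha
  · have hb : b ≠ 0 := by
      rcases hab with h | h
      · exact absurd ha h
      · exact h
    have hb2 : 0 < b * b := mul_self_pos.mpr hb
    rw [ha] at hlow
    nlinarith [hlow, hb2]
  · have ha2 : 0 < a * a := mul_self_pos.mpr ha
    have h1 : 0 < (W u₁ - W m) * (a * a) := mul_pos (by linarith) ha2
    nlinarith [hlow, h1, sq_nonneg (a + b)]
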